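/- Let X be a real random variable with mean μ and density f ∈ SLC(α). Then for every integer r ≥ 1, the centred moments satisfy M_{2r}(X) ≤ α(2r−1)·M_{2r−2}(X), where M_k(X) = E[(X−μ)^k]. -/

import Mathlib

open MeasureTheory Filter Set


variable {f : ℝ → ℝ} {α : ℝ}

/-- derivative of f in terms of the SLC function g -/
lemma slc_deriv_eq (hf : Differentiable ℝ f) (hfpos : ∀ x, 0 < f x) (hα : 0 < α) (x : ℝ) :
    deriv f x = f x * (deriv f x / f x + x / α) - x * f x / α := by
  have h := (hfpos x).ne'
  field_simp
  ring

/-- ψ has derivative g -/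
lemma slc_psi_deriv (hf : Differentiable ℝ f) (hfpos : ∀ x, 0 < f x) (hα : 0 < α) (x : ℝ) :
    HasDerivAt (fun y => Real.log (f y) + y ^ 2 / (2 * α))
      (deriv f x / f x + x / α) x := by
  have h1 : HasDerivAt (fun y => Real.log (f y)) (deriv f x / f x) x :=
    ((hf x).hasDerivAt).log (ne_of_gt (hfpos x))
  have h2 : HasDerivAt (fun y : ℝ => y ^ 2 / (2 * α)) (x / α) x := by
    have := (hasDerivAt_pow 2 x).div_const (2 * α)
    refine this.congr_deriv ?_
    have := hα.ne'
    field_simp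
    ring
  exact h1.add h2

/-- Gaussian upper bound for SLC densities -/
lemma slc_gaussian_bound (hf : Differentiable ℝ f) (hfpos : ∀ x, 0 < f x) (hα : 0 < α)
    (hslc : Antitone fun x => deriv f x / f x + x / α) :
    ∀ x, f x ≤ Real.exp (Real.log (f 0)) *
      Real.exp ((deriv f 0 / f 0 + 0 / α) * x - x ^ 2 / (2 * α)) := by
  set g : ℝ → ℝ := fun x => deriv f x / f x + x / α with hg
  set ψ : ℝ → ℝ := fun y => Real.log (f y) + y ^ 2 / (2 * α) with hψ
  have hψd : ∀ x, HasDerivAt ψ (g x) x := fun x => slc_psi_deriv hf hfpos hα x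
  -- φ x = ψ 0 + g 0 * x - ψ x ≥ 0 for all x
  have key : ∀ x, ψ x ≤ ψ 0 + g 0 * x := by
    set φ : ℝ → ℝ := fun x => ψ 0 + g 0 * x - ψ x with hφ
    have hφd : ∀ x, HasDerivAt φ (g 0 - g x) x := by
      intro x
      have := ((hasDerivAt_const x (ψ 0)).add ((hasDerivAt_id x).const_mul (g 0))).sub (hψd x)
      simp only [mul_one, zero_add] at this
      exact this
    have hφdiff : Differentiable ℝ φ := fun x => (hφd x).differentiableAt
    have hder : ∀ x, deriv φ x = g 0 - g x := fun x => (hφd x).deriv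
    have h1 : MonotoneOn φ (Ici 0) := by
      apply monotoneOn_of_deriv_nonneg (convex_Ici 0) hφdiff.continuous.continuousOn
        hφdiff.differentiableOn
      intro x hx
      rw [hder]
      have : g x ≤ g 0 := hslc (le_of_lt (by simpa [interior_Ici] using hx))
      linarith
    have h2 : AntitoneOn φ (Iic 0) := by
      apply antitoneOn_of_deriv_nonpos (convex_Iic 0) hφdiff.continuous.continuousOn
        hφdiff.differentiableOn
      intro x hx
      rw [hder]
      have : g 0 ≤ g x := hslc (le_of_lt (by simpa [interior_Iic] using hx))
      linarith
    intro x
    have hφ0 : φ 0 = 0 := by simp [hφ]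
    rcases le_total 0 x with h | h
    · have := h1 (self_mem_Ici) (mem_Ici.2 h) h
      simp only [hφ0] at this; simp only [hφ] at this; linarith
    · have := h2 (mem_Iic.2 h) self_mem_Iic h
      simp only [hφ0] at this; simp only [hφ] at this; linarith
  intro x
  have h1 : f x = Real.exp (Real.log (f x)) := (Real.exp_log (hfpos x)).symm
  rw [h1, ← Real.exp_add]
  apply Real.exp_le_exp.2
  have := key x
  simp only [hψ] at this
  have h0 : (0:ℝ) ^ 2 / (2 * α) = 0 := by simp
  nlinarith [this]

lemma gauss_tendsto {α : ℝ} (hα : 0 < α) (C b : ℝ) (k : ℕ) :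
    Tendsto (fun x => x ^ k * (C * Real.exp (b * x - x ^ 2 / (2 * α)))) atTop (nhds 0) := by
  have hlim : Tendsto (fun x : ℝ => |C| * (x ^ k * Real.exp (-x))) atTop (nhds 0) := by
    simpa using (Real.tendsto_pow_mul_exp_neg_atTop_nhds_zero k).const_mul |C|
  apply squeeze_zero_norm' _ hlim
  filter_upwards [eventually_ge_atTop (max 0 (2 * α * (b + 1)))] with x hx
  have hx0 : (0:ℝ) ≤ x := le_trans (le_max_left _ _) hx
  have hx1 : 2 * α * (b + 1) ≤ x := le_trans (le_max_right _ _) hx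
  have hexp : b * x - x ^ 2 / (2 * α) ≤ -x := by
    have h2 : (b + 1) * x ≤ x ^ 2 / (2 * α) := by
      rw [le_div_iff₀ (by positivity)]
      nlinarith [mul_le_mul_of_nonneg_left hx1 hx0]
    linarith
  have h3 : Real.exp (b * x - x ^ 2 / (2 * α)) ≤ Real.exp (-x) := Real.exp_le_exp.2 hexp
  have h4 : ‖x ^ k * (C * Real.exp (b * x - x ^ 2 / (2 * α)))‖
      = x ^ k * (|C| * Real.exp (b * x - x ^ 2 / (2 * α))) := by
    rw [norm_mul, norm_mul, Real.norm_eq_abs, Real.norm_eq_abs, Real.norm_eq_abs,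
      abs_pow, abs_of_nonneg hx0, Real.abs_exp]
  rw [h4]
  have := Real.exp_pos (b * x - x ^ 2 / (2 * α))
  calc x ^ k * (|C| * Real.exp (b * x - x ^ 2 / (2 * α)))
      ≤ x ^ k * (|C| * Real.exp (-x)) := by
        apply mul_le_mul_of_nonneg_left _ (by positivity)
        exact mul_le_mul_of_nonneg_left h3 (abs_nonneg C)
    _ = |C| * (x ^ k * Real.exp (-x)) := by ring

lemma poly_mul_tendsto {f : ℝ → ℝ} {α : ℝ} (hα : 0 < α) (C b : ℝ)
    (hfpos : ∀ x, 0 < f x) (hbd : ∀ x, f x ≤ C * Real.exp (b * x - x ^ 2 / (2 * α))) (k : ℕ) :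
    Tendsto (fun x => x ^ k * f x) atTop (nhds 0) ∧
      Tendsto (fun x => x ^ k * f x) atBot (nhds 0) := by
  constructor
  · apply squeeze_zero_norm' _ (gauss_tendsto hα C b k)
    filter_upwards [eventually_ge_atTop (0:ℝ)] with x hx0
    rw [Real.norm_eq_abs, abs_mul, abs_pow, abs_of_nonneg hx0,
      abs_of_pos (hfpos x)]
    exact mul_le_mul_of_nonneg_left (hbd x) (by positivity)
  · have T : Tendsto (fun y : ℝ => (-y) ^ k * f (-y)) atTop (nhds 0) := by
      apply squeeze_zero_norm' _ (gauss_tendsto hα C (-b) k)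
      filter_upwards [eventually_ge_atTop (0:ℝ)] with y hy0
      rw [Real.norm_eq_abs, abs_mul, abs_pow, abs_neg, abs_of_nonneg hy0,
        abs_of_pos (hfpos (-y))]
      have := hbd (-y)
      have heq : b * (-y) - (-y) ^ 2 / (2 * α) = -b * y - y ^ 2 / (2 * α) := by ring_nf
      rw [heq] at this
      exact mul_le_mul_of_nonneg_left this (by positivity)
    have h2 := T.comp tendsto_neg_atBot_atTop
    have heq : ((fun y : ℝ => (-y) ^ k * f (-y)) ∘ Neg.neg) = fun x => x ^ k * f x := by
      funext x; simp [Function.comp]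
    rwa [heq] at h2

lemma antitone_mul_cont_intInt {g φ : ℝ → ℝ} (hg : Antitone g) (hφ : Continuous φ) (a b : ℝ) :
    IntervalIntegrable (fun x => φ x * g x) volume a b := by
  rw [intervalIntegrable_iff]
  obtain ⟨Mφ, hMφ⟩ := (isCompact_Icc (a := a ⊓ b) (b := a ⊔ b)).exists_bound_of_continuousOn
    hφ.continuousOn
  set Mg : ℝ := |g (a ⊓ b)| ⊔ |g (a ⊔ b)| with hMg
  apply Integrable.mono' (g := fun _ => Mφ * Mg)
    (integrableOn_const measure_Ioc_lt_top.ne)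
    ((hφ.measurable.mul hg.measurable).aestronglyMeasurable)
  filter_upwards [ae_restrict_mem measurableSet_Ioc] with x hx
  have hx1 : a ⊓ b ≤ x := le_of_lt hx.1
  have hx2 : x ≤ a ⊔ b := hx.2
  have hgb : |g x| ≤ Mg := by
    rw [abs_le]
    constructor
    · have := hg hx2
      have h2 : -(|g (a ⊔ b)|) ≤ g (a ⊔ b) := neg_abs_le _
      have : -(|g (a ⊔ b)|) ≤ g x := le_trans h2 this
      exact le_trans (neg_le_neg (le_max_right _ _)) this
    · exact le_trans (le_trans (hg hx1) (le_abs_self _)) (le_max_left _ _)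
  have hφb : |φ x| ≤ Mφ := hMφ x (mem_Icc.2 ⟨hx1, hx2⟩)
  rw [Real.norm_eq_abs, Pi.mul_apply, abs_mul]
  have h0 : (0:ℝ) ≤ Mφ := le_trans (abs_nonneg _) hφb
  exact mul_le_mul hφb hgb (abs_nonneg _) h0


lemma slc_deriv_intInt (hf : Differentiable ℝ f) (hfpos : ∀ x, 0 < f x) (hα : 0 < α)
    (hslc : Antitone fun x => deriv f x / f x + x / α) (a b : ℝ) :
    IntervalIntegrable (deriv f) volume a b := by
  have heq : deriv f = fun x => f x * (deriv f x / f x + x / α) - x * f x / α := by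
    funext x
    have h := (hfpos x).ne'
    field_simp
    ring
  rw [heq]
  exact (antitone_mul_cont_intInt hslc hf.continuous a b).sub
    ((Continuous.div_const (continuous_id.mul hf.continuous) α).intervalIntegrable a b)

lemma slc_pow_deriv_intInt (hf : Differentiable ℝ f) (hfpos : ∀ x, 0 < f x) (hα : 0 < α)
    (hslc : Antitone fun x => deriv f x / f x + x / α) (k : ℕ) (a b : ℝ) :
    IntervalIntegrable (fun x => x ^ k * deriv f x) volume a b :=
  (slc_deriv_intInt hf hfpos hα hslc a b).continuousOn_mul (continuous_pow k).continuousOn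

lemma slc_ibp (hf : Differentiable ℝ f) (hfpos : ∀ x, 0 < f x) (hα : 0 < α)
    (hslc : Antitone fun x => deriv f x / f x + x / α) (k : ℕ) (a b : ℝ) :
    ∫ x in a..b, x ^ k * deriv f x
      = b ^ k * f b - a ^ k * f a - k * ∫ x in a..b, x ^ (k - 1) * f x := by
  rcases Nat.eq_zero_or_pos k with hk | hk
  · subst hk
    simp only [pow_zero, one_mul, Nat.cast_zero, Nat.zero_sub, zero_mul, sub_zero]
    exact intervalIntegral.integral_deriv_eq_sub (fun x _ => hf x)
      (slc_deriv_intInt hf hfpos hα hslc a b)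
  · have hu : ∀ x ∈ uIcc a b, HasDerivAt (fun y : ℝ => y ^ k) ((k:ℝ) * x ^ (k - 1)) x :=
      fun x _ => hasDerivAt_pow k x
    have hv : ∀ x ∈ uIcc a b, HasDerivAt f (deriv f x) x := fun x _ => (hf x).hasDerivAt
    have hu' : IntervalIntegrable (fun x : ℝ => (k:ℝ) * x ^ (k - 1)) volume a b :=
      (Continuous.intervalIntegrable (by continuity) a b)
    have hv' := slc_deriv_intInt hf hfpos hα hslc a b
    have h := intervalIntegral.integral_deriv_mul_eq_sub hu hv hu' hv'
    have h1 : IntervalIntegrable (fun x : ℝ => (k:ℝ) * x ^ (k - 1) * f x) volume a b :=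
      (Continuous.intervalIntegrable
        (((continuous_const.mul (continuous_pow _)).mul hf.continuous)) a b)
    have h2 := slc_pow_deriv_intInt hf hfpos hα hslc k a b
    rw [intervalIntegral.integral_add h1 h2] at h
    have h3 : ∫ x in a..b, (k:ℝ) * x ^ (k - 1) * f x
        = (k:ℝ) * ∫ x in a..b, x ^ (k - 1) * f x := by
      rw [← intervalIntegral.integral_const_mul]
      congr 1; funext x; ring
    rw [h3] at h
    linarith


-- interval moment bound
lemma mom_interval_bound (hmom0 : ∀ n : ℕ, Integrable (fun x => x ^ n * f x))
    (j : ℕ) (a b : ℝ) (hab : a ≤ b) :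
    |∫ x in a..b, x ^ j * f x| ≤ ∫ x, |x ^ j * f x| := by
  refine le_trans (intervalIntegral.abs_integral_le_integral_abs hab) ?_
  rw [intervalIntegral.integral_of_le hab]
  exact setIntegral_le_integral (hmom0 j).abs (Filter.Eventually.of_forall fun x => abs_nonneg _)

lemma mom_abs_nonneg (j : ℕ) : (0:ℝ) ≤ ∫ x, |x ^ j * f x| :=
  integral_nonneg fun x => abs_nonneg _

lemma slc_fg_pointwise (hfpos : ∀ x, 0 < f x) (k : ℕ) (x : ℝ) :
    x ^ k * f x * (deriv f x / f x + x / α)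
      = x ^ k * deriv f x + (1 / α) * (x ^ (k + 1) * f x) := by
  have h := (hfpos x).ne'
  field_simp
  ring

lemma pow_mul_f_intInt (hf : Differentiable ℝ f) (j : ℕ) (a b : ℝ) :
    IntervalIntegrable (fun x => x ^ j * f x) volume a b :=
  Continuous.intervalIntegrable ((continuous_pow j).mul hf.continuous) a b

lemma slc_fg_interval {a b : ℝ} {k : ℕ} (hf : Differentiable ℝ f) (hfpos : ∀ x, 0 < f x) (hα : 0 < α)
    (hslc : Antitone fun x => deriv f x / f x + x / α)
    (hibp : ∫ x in a..b, x ^ k * deriv f x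
      = b ^ k * f b - a ^ k * f a - k * ∫ x in a..b, x ^ (k - 1) * f x)
    (hdint : IntervalIntegrable (fun x => x ^ k * deriv f x) volume a b) :
    ∫ x in a..b, x ^ k * f x * (deriv f x / f x + x / α)
      = (b ^ k * f b - a ^ k * f a - k * ∫ x in a..b, x ^ (k - 1) * f x)
        + (1 / α) * ∫ x in a..b, x ^ (k + 1) * f x := by
  have heq : EqOn (fun x => x ^ k * f x * (deriv f x / f x + x / α))
      (fun x => x ^ k * deriv f x + (1 / α) * (x ^ (k + 1) * f x)) (uIcc a b) :=
    fun x _ => slc_fg_pointwise hfpos k x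
  rw [intervalIntegral.integral_congr heq]
  have h2 : IntervalIntegrable (fun x => (1 / α) * (x ^ (k + 1) * f x)) volume a b :=
    (pow_mul_f_intInt hf (k + 1) a b).const_mul _
  rw [intervalIntegral.integral_add hdint h2, intervalIntegral.integral_const_mul, hibp]

lemma slc_fg_integrable (hf : Differentiable ℝ f) (hfpos : ∀ x, 0 < f x) (hα : 0 < α)
    (hslc : Antitone fun x => deriv f x / f x + x / α)
    (hmom0 : ∀ n : ℕ, Integrable (fun x => x ^ n * f x)) (k : ℕ) :
    Integrable (fun x => x ^ k * f x * (deriv f x / f x + x / α)) := by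
  have hg : Antitone fun x => deriv f x / f x + x / α := hslc
  have h0k1 : (0:ℝ) ^ k ≤ 1 := pow_le_one₀ le_rfl zero_le_one
  have h0k0 : (0:ℝ) ≤ (0:ℝ) ^ k := pow_nonneg le_rfl k
  have hf0 : (0:ℝ) < f 0 := hfpos 0
  have hinv : (0:ℝ) ≤ 1 / α := by positivity
  have hfgInt : ∀ a b : ℝ, IntervalIntegrable
      (fun x => x ^ k * f x * (deriv f x / f x + x / α)) volume a b :=
    fun a b => antitone_mul_cont_intInt hslc ((continuous_pow k).mul hf.continuous) a b
  have hval : ∀ a b : ℝ, ∫ x in a..b, x ^ k * f x * (deriv f x / f x + x / α)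
      = (b ^ k * f b - a ^ k * f a - k * ∫ x in a..b, x ^ (k - 1) * f x)
        + (1 / α) * ∫ x in a..b, x ^ (k + 1) * f x := fun a b =>
    slc_fg_interval hf hfpos hα hslc (slc_ibp hf hfpos hα hslc k a b)
      (slc_pow_deriv_intInt hf hfpos hα hslc k a b)
  -- part 1 : Ioi 0
  have hIoi : IntegrableOn (fun x => (deriv f 0 / f 0 + 0 / α) * (x ^ k * f x)
      - x ^ k * f x * (deriv f x / f x + x / α)) (Ioi 0) volume := by
    apply integrableOn_Ioi_of_intervalIntegral_norm_bounded (l := atTop) (b := id)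
      (|deriv f 0 / f 0 + 0 / α| * (∫ x, |x ^ k * f x|) + f 0
        + k * (∫ x, |x ^ (k - 1) * f x|) + (1 / α) * (∫ x, |x ^ (k + 1) * f x|)) 0
    · intro R
      exact (((pow_mul_f_intInt hf k 0 R).const_mul _).sub (hfgInt 0 R)).1
    · exact tendsto_id
    · filter_upwards [eventually_ge_atTop (0:ℝ)] with R hR
      simp only [id_eq]
      have heqon : EqOn (fun x => ‖(deriv f 0 / f 0 + 0 / α) * (x ^ k * f x)
          - x ^ k * f x * (deriv f x / f x + x / α)‖)
          (fun x => (deriv f 0 / f 0 + 0 / α) * (x ^ k * f x)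
            - x ^ k * f x * (deriv f x / f x + x / α)) (uIcc 0 R) := by
        intro x hx
        rw [uIcc_of_le hR] at hx
        have hx0 : (0:ℝ) ≤ x := hx.1
        have hgle : deriv f x / f x + x / α ≤ deriv f 0 / f 0 + 0 / α := hg hx0
        have hnn : 0 ≤ (deriv f 0 / f 0 + 0 / α) * (x ^ k * f x)
            - x ^ k * f x * (deriv f x / f x + x / α) := by
          have h1 : x ^ k * f x * (deriv f x / f x + x / α)
              ≤ x ^ k * f x * (deriv f 0 / f 0 + 0 / α) :=
            mul_le_mul_of_nonneg_left hgle
              (mul_nonneg (pow_nonneg hx0 k) (hfpos x).le)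
          nlinarith
        simp only [Real.norm_eq_abs, abs_of_nonneg hnn]
      rw [intervalIntegral.integral_congr heqon]
      rw [intervalIntegral.integral_sub
        ((pow_mul_f_intInt hf k 0 R).const_mul _) (hfgInt 0 R),
        intervalIntegral.integral_const_mul, hval 0 R]
      have hI1 := abs_le.1 (mom_interval_bound hmom0 (k - 1) 0 R hR)
      have hI2 := abs_le.1 (mom_interval_bound hmom0 (k + 1) 0 R hR)
      have hg0I3 : (deriv f 0 / f 0 + 0 / α) * ∫ x in (0:ℝ)..R, x ^ k * f x
          ≤ |deriv f 0 / f 0 + 0 / α| * ∫ x, |x ^ k * f x| := by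
        calc (deriv f 0 / f 0 + 0 / α) * ∫ x in (0:ℝ)..R, x ^ k * f x
            ≤ |(deriv f 0 / f 0 + 0 / α) * ∫ x in (0:ℝ)..R, x ^ k * f x| := le_abs_self _
          _ = |deriv f 0 / f 0 + 0 / α| * |∫ x in (0:ℝ)..R, x ^ k * f x| := abs_mul _ _
          _ ≤ _ := mul_le_mul_of_nonneg_left
              (mom_interval_bound hmom0 k 0 R hR) (abs_nonneg _)
      have hRk : 0 ≤ R ^ k * f R := mul_nonneg (pow_nonneg hR k) (hfpos R).le
      have h0f : (0:ℝ) ^ k * f 0 ≤ f 0 := by nlinarith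
      have hkI1 : (k:ℝ) * ∫ x in (0:ℝ)..R, x ^ (k-1) * f x
          ≤ k * ∫ x, |x ^ (k - 1) * f x| :=
        mul_le_mul_of_nonneg_left hI1.2 (Nat.cast_nonneg k)
      have hfI2 : -((1/α) * ∫ x in (0:ℝ)..R, x ^ (k+1) * f x)
          ≤ (1/α) * ∫ x, |x ^ (k + 1) * f x| := by
        rw [← mul_neg]
        exact mul_le_mul_of_nonneg_left (by linarith [hI2.1]) hinv
      linarith
  -- part 2 : Iic 0
  have hIic : IntegrableOn (fun x => (-1:ℝ) ^ k *
      (x ^ k * f x * (deriv f x / f x + x / α)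
        - (deriv f 0 / f 0 + 0 / α) * (x ^ k * f x))) (Iic 0) volume := by
    apply integrableOn_Iic_of_intervalIntegral_norm_bounded (l := atBot) (a := id)
      (|deriv f 0 / f 0 + 0 / α| * (∫ x, |x ^ k * f x|) + f 0
        + k * (∫ x, |x ^ (k - 1) * f x|) + (1 / α) * (∫ x, |x ^ (k + 1) * f x|)) 0
    · intro a
      exact (((hfgInt a 0).sub ((pow_mul_f_intInt hf k a 0).const_mul _)).const_mul _).1
    · exact tendsto_id
    · filter_upwards [eventually_le_atBot (0:ℝ)] with a ha
      simp only [id_eq]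
      have heqon : EqOn (fun x => ‖(-1:ℝ) ^ k *
          (x ^ k * f x * (deriv f x / f x + x / α)
            - (deriv f 0 / f 0 + 0 / α) * (x ^ k * f x))‖)
          (fun x => (-1:ℝ) ^ k * (x ^ k * f x * (deriv f x / f x + x / α)
            - (deriv f 0 / f 0 + 0 / α) * (x ^ k * f x))) (uIcc a 0) := by
        intro x hx
        rw [uIcc_of_le ha] at hx
        have hx0 : x ≤ 0 := hx.2
        have hgge : deriv f 0 / f 0 + 0 / α ≤ deriv f x / f x + x / α := hg hx0
        have hnn : 0 ≤ (-1:ℝ) ^ k * (x ^ k * f x * (deriv f x / f x + x / α)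
            - (deriv f 0 / f 0 + 0 / α) * (x ^ k * f x)) := by
          have hkey : (-1:ℝ) ^ k * (x ^ k * f x * (deriv f x / f x + x / α)
              - (deriv f 0 / f 0 + 0 / α) * (x ^ k * f x))
              = ((-x) ^ k * f x) * ((deriv f x / f x + x / α)
                  - (deriv f 0 / f 0 + 0 / α)) := by
            rw [neg_pow]
            ring
          rw [hkey]
          exact mul_nonneg (mul_nonneg (pow_nonneg (by linarith) k) (hfpos x).le)
            (by linarith)
        simp only [Real.norm_eq_abs, abs_of_nonneg hnn]
      rw [intervalIntegral.integral_congr heqon]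
      rw [intervalIntegral.integral_const_mul,
        intervalIntegral.integral_sub (hfgInt a 0)
          ((pow_mul_f_intInt hf k a 0).const_mul _),
        intervalIntegral.integral_const_mul, hval a 0]
      have hI1 := abs_le.1 (mom_interval_bound hmom0 (k - 1) a 0 ha)
      have hI2 := abs_le.1 (mom_interval_bound hmom0 (k + 1) a 0 ha)
      have hI3 := abs_le.1 (mom_interval_bound hmom0 k a 0 ha)
      have hg0I3 : |(deriv f 0 / f 0 + 0 / α) * ∫ x in a..(0:ℝ), x ^ k * f x|
          ≤ |deriv f 0 / f 0 + 0 / α| * ∫ x, |x ^ k * f x| := by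
        rw [abs_mul]
        exact mul_le_mul_of_nonneg_left (mom_interval_bound hmom0 k a 0 ha) (abs_nonneg _)
      have hg0I3' := abs_le.1 hg0I3
      rcases Nat.even_or_odd k with hek | hok
      · rw [hek.neg_one_pow, one_mul]
        have hak : 0 ≤ a ^ k := hek.pow_nonneg a
        have haf : 0 ≤ a ^ k * f a := mul_nonneg hak (hfpos a).le
        have h1 : (k:ℝ) * ∫ x in a..(0:ℝ), x ^ (k-1) * f x
            ≥ -(k * ∫ x, |x ^ (k - 1) * f x|) := by
          have := mul_le_mul_of_nonneg_left hI1.1 (Nat.cast_nonneg (α := ℝ) k)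
          rw [mul_neg] at this
          linarith
        have h2 : (1/α) * ∫ x in a..(0:ℝ), x ^ (k+1) * f x
            ≤ (1/α) * ∫ x, |x ^ (k + 1) * f x| := mul_le_mul_of_nonneg_left hI2.2 hinv
        have h3 : (0:ℝ) ^ k * f 0 ≤ f 0 := by nlinarith
        linarith [hg0I3'.1]
      · rw [hok.neg_one_pow, neg_one_mul]
        have hak : a ^ k ≤ 0 := hok.pow_nonpos ha
        have haf : a ^ k * f a ≤ 0 := mul_nonpos_of_nonpos_of_nonneg hak (hfpos a).le
        have h1 : (k:ℝ) * ∫ x in a..(0:ℝ), x ^ (k-1) * f x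
            ≤ k * ∫ x, |x ^ (k - 1) * f x| :=
          mul_le_mul_of_nonneg_left hI1.2 (Nat.cast_nonneg k)
        have h2 : -((1/α) * ∫ x in a..(0:ℝ), x ^ (k+1) * f x)
            ≤ (1/α) * ∫ x, |x ^ (k + 1) * f x| := by
          rw [← mul_neg]
          exact mul_le_mul_of_nonneg_left (by linarith [hI2.1]) hinv
        have h3 : (0:ℝ) ≤ (0:ℝ) ^ k * f 0 := mul_nonneg h0k0 hf0.le
        linarith [hg0I3'.2]
  -- combine
  have hε2 : ((-1:ℝ) ^ k) * ((-1:ℝ) ^ k) = 1 := by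
    rw [← pow_add, ← two_mul, pow_mul]
    norm_num
  have hIic' : IntegrableOn (fun x => x ^ k * f x * (deriv f x / f x + x / α))
      (Iic 0) volume := by
    have heq : (fun x : ℝ => x ^ k * f x * (deriv f x / f x + x / α))
        = fun x => (-1:ℝ) ^ k * ((-1:ℝ) ^ k * (x ^ k * f x * (deriv f x / f x + x / α)
            - (deriv f 0 / f 0 + 0 / α) * (x ^ k * f x)))
          + (deriv f 0 / f 0 + 0 / α) * (x ^ k * f x) := by
      funext x
      rw [← mul_assoc, hε2]
      ring
    rw [heq]
    exact (hIic.const_mul _).add ((hmom0 k).const_mul _).integrableOn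
  have hIoi' : IntegrableOn (fun x => x ^ k * f x * (deriv f x / f x + x / α))
      (Ioi 0) volume := by
    have heq : (fun x : ℝ => x ^ k * f x * (deriv f x / f x + x / α))
        = fun x => (deriv f 0 / f 0 + 0 / α) * (x ^ k * f x)
          - ((deriv f 0 / f 0 + 0 / α) * (x ^ k * f x)
            - x ^ k * f x * (deriv f x / f x + x / α)) := by
      funext x; ring
    rw [heq]
    exact ((hmom0 k).const_mul _).integrableOn.sub hIoi
  have hcomb := hIic'.union hIoi'
  rwa [Iic_union_Ioi, integrableOn_univ] at hcomb

lemma slc_pow_deriv_integrable (hf : Differentiable ℝ f) (hfpos : ∀ x, 0 < f x) (hα : 0 < α)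
    (hslc : Antitone fun x => deriv f x / f x + x / α)
    (hmom0 : ∀ n : ℕ, Integrable (fun x => x ^ n * f x)) (k : ℕ) :
    Integrable (fun x => x ^ k * deriv f x) := by
  have heq : (fun x => x ^ k * deriv f x)
      = fun x => x ^ k * f x * (deriv f x / f x + x / α)
        - (1 / α) * (x ^ (k + 1) * f x) := by
    funext x
    rw [slc_fg_pointwise hfpos k x]
    ring
  rw [heq]
  exact (slc_fg_integrable hf hfpos hα hslc hmom0 k).sub ((hmom0 (k + 1)).const_mul _)

lemma slc_deriv_moment (hf : Differentiable ℝ f) (hfpos : ∀ x, 0 < f x) (hα : 0 < α)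
    (hslc : Antitone fun x => deriv f x / f x + x / α)
    (hmom0 : ∀ n : ℕ, Integrable (fun x => x ^ n * f x)) (k : ℕ) :
    ∫ x, x ^ k * deriv f x = -(k:ℝ) * ∫ x, x ^ (k - 1) * f x := by
  have hcast : Tendsto (fun n : ℕ => (n:ℝ)) atTop atTop := tendsto_natCast_atTop_atTop
  have hcastneg : Tendsto (fun n : ℕ => -(n:ℝ)) atTop atBot :=
    tendsto_neg_atTop_atBot.comp hcast
  have hint := slc_pow_deriv_integrable hf hfpos hα hslc hmom0 k
  have T1 := intervalIntegral_tendsto_integral hint hcastneg hcast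
  have T2 := intervalIntegral_tendsto_integral (hmom0 (k - 1)) hcastneg hcast
  obtain ⟨Btop, Bbot⟩ := poly_mul_tendsto hα (Real.exp (Real.log (f 0)))
    (deriv f 0 / f 0 + 0 / α) hfpos (slc_gaussian_bound hf hfpos hα hslc) k
  have C1 : Tendsto (fun n : ℕ => ((n:ℝ)) ^ k * f ((n:ℝ))) atTop (nhds 0) :=
    Btop.comp hcast
  have C2 : Tendsto (fun n : ℕ => (-(n:ℝ)) ^ k * f (-(n:ℝ))) atTop (nhds 0) :=
    Bbot.comp hcastneg
  have heq : ∀ n : ℕ, ∫ x in (-(n:ℝ))..(n:ℝ), x ^ k * deriv f x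
      = (((n:ℝ)) ^ k * f ((n:ℝ)) - (-(n:ℝ)) ^ k * f (-(n:ℝ)))
        - (k:ℝ) * ∫ x in (-(n:ℝ))..(n:ℝ), x ^ (k - 1) * f x := by
    intro n
    rw [slc_ibp hf hfpos hα hslc k (-(n:ℝ)) (n:ℝ)]
  have T3 : Tendsto (fun n : ℕ => ∫ x in (-(n:ℝ))..(n:ℝ), x ^ k * deriv f x) atTop
      (nhds ((0 - 0) - (k:ℝ) * ∫ x, x ^ (k - 1) * f x)) := by
    have := ((C1.sub C2).sub (T2.const_mul (k:ℝ)))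
    apply Tendsto.congr _ this
    intro n
    exact (heq n).symm
  have huniq := tendsto_nhds_unique T1 T3
  rw [huniq]
  ring

lemma chebyshev_corr {f u w : ℝ → ℝ} (hfnn : ∀ x, 0 ≤ f x) (hfint : Integrable f)
    (hprob : ∫ x, f x = 1) (hu : Monotone u) (hw : Antitone w)
    (huint : Integrable (fun x => u x * f x))
    (hwint : Integrable (fun x => w x * f x))
    (huwint : Integrable (fun x => u x * w x * f x)) :
    ∫ x, u x * w x * f x ≤ (∫ x, u x * f x) * (∫ x, w x * f x) := by
  have key : ∀ x : ℝ, f x * (u x * w x) * 1 + f x * (∫ y, u y * w y * f y)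
      - (f x * u x * (∫ y, w y * f y) + f x * w x * (∫ y, u y * f y)) ≤ 0 := by
    intro x
    have hinner : ∫ y, (u x - u y) * (w x - w y) * (f x * f y) ≤ 0 := by
      apply integral_nonpos
      intro y
      have h1 : (u x - u y) * (w x - w y) ≤ 0 := by
        rcases le_total x y with hxy | hxy
        · exact mul_nonpos_of_nonpos_of_nonneg
            (sub_nonpos.2 (hu hxy)) (sub_nonneg.2 (hw hxy))
        · exact mul_nonpos_of_nonneg_of_nonpos
            (sub_nonneg.2 (hu hxy)) (sub_nonpos.2 (hw hxy))
      exact mul_nonpos_of_nonpos_of_nonneg h1 (mul_nonneg (hfnn x) (hfnn y))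
    have hexp : (fun y => (u x - u y) * (w x - w y) * (f x * f y))
        = fun y => ((f x * (u x * w x)) * f y + f x * (u y * w y * f y))
          - ((f x * u x) * (w y * f y) + (f x * w x) * (u y * f y)) := by
      funext y; ring
    rw [hexp] at hinner
    have hA : Integrable (fun y => (f x * (u x * w x)) * f y) := hfint.const_mul _
    have hB : Integrable (fun y => f x * (u y * w y * f y)) := huwint.const_mul _
    have hC : Integrable (fun y => (f x * u x) * (w y * f y)) := hwint.const_mul _
    have hD : Integrable (fun y => (f x * w x) * (u y * f y)) := huint.const_mul _
    have hAB : Integrable (fun y => (f x * (u x * w x)) * f y + f x * (u y * w y * f y)) :=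
      hA.add hB
    have hCD : Integrable (fun y => (f x * u x) * (w y * f y) + (f x * w x) * (u y * f y)) :=
      hC.add hD
    rw [integral_sub hAB hCD, integral_add hA hB, integral_add hC hD,
      integral_const_mul _ _, integral_const_mul _ _, integral_const_mul _ _, integral_const_mul _ _,
      hprob] at hinner
    linarith
  have hsum : ∫ x, (f x * (u x * w x) * 1 + f x * (∫ y, u y * w y * f y)
      - (f x * u x * (∫ y, w y * f y) + f x * w x * (∫ y, u y * f y))) ≤ 0 :=
    integral_nonpos key
  have h1 : Integrable (fun x => f x * (u x * w x) * 1) := by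
    simpa [mul_comm, mul_one, mul_assoc, mul_left_comm] using huwint
  have h2 : Integrable (fun x => f x * (∫ y, u y * w y * f y)) := hfint.mul_const _
  have h3 : Integrable (fun x => f x * u x * (∫ y, w y * f y)) := by
    have : Integrable (fun x => u x * f x * (∫ y, w y * f y)) := huint.mul_const _
    simpa [mul_comm, mul_assoc, mul_left_comm] using this
  have h4 : Integrable (fun x => f x * w x * (∫ y, u y * f y)) := by
    have : Integrable (fun x => w x * f x * (∫ y, u y * f y)) := hwint.mul_const _
    simpa [mul_comm, mul_assoc, mul_left_comm] using this
  have h12 : Integrable (fun x => f x * (u x * w x) * 1 + f x * (∫ y, u y * w y * f y)) :=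
    h1.add h2
  have h34 : Integrable (fun x => f x * u x * (∫ y, w y * f y)
      + f x * w x * (∫ y, u y * f y)) := h3.add h4
  rw [integral_sub h12 h34, integral_add h1 h2, integral_add h3 h4] at hsum
  have e1 : ∫ x, f x * (u x * w x) * 1 = ∫ x, u x * w x * f x := by
    congr 1; funext x; ring
  have e2 : ∫ x, f x * (∫ y, u y * w y * f y) = (∫ x, f x) * (∫ y, u y * w y * f y) :=
    integral_mul_const _ _
  have e3 : ∫ x, f x * u x * (∫ y, w y * f y) = (∫ x, f x * u x) * (∫ y, w y * f y) :=
    integral_mul_const _ _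
  have e4 : ∫ x, f x * w x * (∫ y, u y * f y) = (∫ x, f x * w x) * (∫ y, u y * f y) :=
    integral_mul_const _ _
  have e5 : ∫ x, f x * u x = ∫ x, u x * f x := by congr 1; funext x; ring
  have e6 : ∫ x, f x * w x = ∫ x, w x * f x := by congr 1; funext x; ring
  rw [e1, e2, e3, e4, e5, e6, hprob, one_mul] at hsum
  linarith

lemma slc_main0 (hf : Differentiable ℝ f) (hfpos : ∀ x, 0 < f x) (hα : 0 < α)
    (hslc : Antitone fun x => deriv f x / f x + x / α)
    (hprob : ∫ x, f x = 1) (hmean0 : ∫ x, x * f x = 0)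
    (hmom0 : ∀ n : ℕ, Integrable (fun x => x ^ n * f x)) :
    ∀ r : ℕ, 1 ≤ r →
      (∫ x, x ^ (2 * r) * f x) ≤ α * (2 * (r : ℝ) - 1) * ∫ x, x ^ (2 * r - 2) * f x := by
  intro r hr
  set k : ℕ := 2 * r - 1 with hk
  have hkodd : Odd k := ⟨r - 1, by omega⟩
  have hk1 : k + 1 = 2 * r := by omega
  have hkm : k - 1 = 2 * r - 2 := by omega
  have hmean1 : ∫ x, x ^ 1 * f x = 0 := by
    rw [← hmean0]; congr 1; funext x; rw [pow_one]
  -- ∫ w f = 0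
  have hwf_eq : (fun x => (deriv f x / f x + x / α) * f x)
      = fun x => x ^ 0 * deriv f x + (1 / α) * (x ^ (0 + 1) * f x) := by
    funext x
    have h := slc_fg_pointwise (α := α) hfpos 0 x
    calc (deriv f x / f x + x / α) * f x
        = x ^ 0 * f x * (deriv f x / f x + x / α) := by ring
      _ = x ^ 0 * deriv f x + (1 / α) * (x ^ (0 + 1) * f x) := h
  have hwint : Integrable (fun x => (deriv f x / f x + x / α) * f x) := by
    have h := slc_fg_integrable hf hfpos hα hslc hmom0 0
    have heq : (fun x => (deriv f x / f x + x / α) * f x)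
        = fun x => x ^ 0 * f x * (deriv f x / f x + x / α) := by
      funext x; ring
    rw [heq]; exact h
  have hIw : ∫ x, (deriv f x / f x + x / α) * f x = 0 := by
    rw [hwf_eq, integral_add (slc_pow_deriv_integrable hf hfpos hα hslc hmom0 0)
      ((hmom0 (0 + 1)).const_mul _), slc_deriv_moment hf hfpos hα hslc hmom0 0,
      integral_const_mul _ _]
    simp only [pow_one] at hmean1
    simp [hmean1]
  -- Chebyshev
  have hcheb := chebyshev_corr (f := f) (u := fun x => x ^ k)
    (w := fun x => deriv f x / f x + x / α)
    (fun x => (hfpos x).le) ((hmom0 0).congr ?mes) hprob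
    (hkodd.strictMono_pow.monotone) hslc ?hui ?hwi ?huwi
  case mes => filter_upwards with x; rw [pow_zero, one_mul]
  case hui => exact hmom0 k
  case hwi => exact hwint
  case huwi =>
    have heq : (fun x => x ^ k * (deriv f x / f x + x / α) * f x)
        = fun x => x ^ k * f x * (deriv f x / f x + x / α) := by funext x; ring
    rw [heq]; exact slc_fg_integrable hf hfpos hα hslc hmom0 k
  have hIw' : ∫ x, (fun x => deriv f x / f x + x / α) x * f x = 0 := hIw
  rw [hIw', mul_zero] at hcheb
  -- the final computation
  have hpt : (fun x => x ^ (2 * r) * f x)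
      = fun x => α * (x ^ k * f x * (deriv f x / f x + x / α))
        - α * (x ^ k * deriv f x) := by
    funext x
    have h := slc_fg_pointwise (α := α) hfpos k x
    rw [h, ← hk1]
    field_simp
    ring
  have hIuw_eq : ∫ x, x ^ k * (deriv f x / f x + x / α) * f x
      = ∫ x, x ^ k * f x * (deriv f x / f x + x / α) := by
    congr 1; funext x; ring
  rw [hIuw_eq] at hcheb
  have hsplit : ∫ x, x ^ (2 * r) * f x
      = α * (∫ x, x ^ k * f x * (deriv f x / f x + x / α))
        - α * ∫ x, x ^ k * deriv f x := by
    rw [hpt, integral_sub ((slc_fg_integrable hf hfpos hα hslc hmom0 k).const_mul α)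
      ((slc_pow_deriv_integrable hf hfpos hα hslc hmom0 k).const_mul α),
      integral_const_mul _ _, integral_const_mul _ _]
  have hdm := slc_deriv_moment hf hfpos hα hslc hmom0 k
  rw [hkm] at hdm
  have hkcast : (k : ℝ) = 2 * (r : ℝ) - 1 := by
    rw [hk]
    push_cast [Nat.cast_sub (by omega : 1 ≤ 2 * r)]
    ring
  have hIuw_np : α * (∫ x, x ^ k * f x * (deriv f x / f x + x / α)) ≤ 0 :=
    mul_nonpos_of_nonneg_of_nonpos hα.le hcheb
  rw [hsplit, hdm]
  rw [hkcast] at *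
  nlinarith [hIuw_np]


/-- Moment recursion for strongly log-concave densities: if `f ∈ SLC(α)` with mean `μ`,
then for every `r ≥ 1`, `M_{2r}(X) ≤ α(2r-1)·M_{2r-2}(X)`, where `M_k(X) = E[(X-μ)^k]`. -/
theorem slc_moment_recursion
    (f : ℝ → ℝ) (hf : Differentiable ℝ f) (hfpos : ∀ x, 0 < f x)
    (α : ℝ) (hα : 0 < α)
    (hslc : Antitone fun x => deriv f x / f x + x / α)
    (hprob : ∫ x, f x = 1)
    (μ : ℝ) (hmeanInt : Integrable fun x => x * f x) (hmean : ∫ x, x * f x = μ)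
    (hmom : ∀ n : ℕ, Integrable fun x => (x - μ) ^ n * f x) :
    ∀ r : ℕ, 1 ≤ r →
      (∫ x, (x - μ) ^ (2 * r) * f x) ≤
        α * (2 * (r : ℝ) - 1) * ∫ x, (x - μ) ^ (2 * r - 2) * f x := by
  intro r hr
  have hFdiff : Differentiable ℝ (fun x => f (x + μ)) :=
    hf.comp (differentiable_id.add_const μ)
  have hFpos : ∀ x, 0 < f (x + μ) := fun x => hfpos (x + μ)
  have hFderiv : ∀ x, deriv (fun x => f (x + μ)) x = deriv f (x + μ) :=
    fun x => deriv_comp_add_const f μ x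
  have hFslc : Antitone fun x => deriv (fun x => f (x + μ)) x / f (x + μ) + x / α := by
    intro a b hab
    simp only [hFderiv]
    have h1 := hslc (by linarith : a + μ ≤ b + μ)
    simp only at h1
    have e1 : (a + μ) / α = a / α + μ / α := add_div _ _ _
    have e2 : (b + μ) / α = b / α + μ / α := add_div _ _ _
    rw [e1, e2] at h1
    linarith
  have hFprob : ∫ x, f (x + μ) = 1 := by
    rw [integral_add_right_eq_self f μ]; exact hprob
  have hfint : Integrable f := by
    apply (hmom 0).congr
    filter_upwards with x
    rw [pow_zero, one_mul]
  have hFmom : ∀ n : ℕ, Integrable (fun x => x ^ n * f (x + μ)) := by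
    intro n
    apply ((hmom n).comp_add_right μ).congr
    filter_upwards with x
    simp [add_sub_cancel_right]
  have hFmean : ∫ x, x * f (x + μ) = 0 := by
    have h1 : ∫ x, ((x + μ) - μ) * f (x + μ) = ∫ y, (y - μ) * f y :=
      integral_add_right_eq_self (fun y => (y - μ) * f y) μ
    have h2 : ∫ x, x * f (x + μ) = ∫ x, ((x + μ) - μ) * f (x + μ) := by
      congr 1; funext x; rw [add_sub_cancel_right]
    have h3 : ∫ y, (y - μ) * f y = (∫ y, y * f y) - μ * ∫ y, f y := by
      have he : (fun y => (y - μ) * f y) = fun y => y * f y - μ * f y := by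
        funext y; ring
      rw [he, integral_sub hmeanInt (hfint.const_mul μ), integral_const_mul _ _]
    rw [h2, h1, h3, hmean, hprob]
    ring
  have H := slc_main0 hFdiff hFpos hα hFslc hFprob hFmean hFmom r hr
  have t1 : ∫ x, x ^ (2 * r) * f (x + μ) = ∫ x, (x - μ) ^ (2 * r) * f x := by
    rw [← integral_add_right_eq_self (fun y => (y - μ) ^ (2 * r) * f y) μ]
    congr 1; funext x; rw [add_sub_cancel_right]
  have t2 : ∫ x, x ^ (2 * r - 2) * f (x + μ) = ∫ x, (x - μ) ^ (2 * r - 2) * f x := by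
    rw [← integral_add_right_eq_self (fun y => (y - μ) ^ (2 * r - 2) * f y) μ]
    congr 1; funext x; rw [add_sub_cancel_right]
  rw [t1, t2] at H
  exact H
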